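/- arXiv:2003.04776 — 3 statements merged into one kernel-verified Lean document; each statement's English description precedes it below -/
import Mathlib

section
/- Let S and T be real m×m matrices, β > 0, a, b ∈ ℝ, B = [[a, b],[-b, a]], D = β·I₂. The map Z ↦ S Z D - T Z B on ℝ^{m×2} is bijective (so that the equation S Z D - T Z B = Y has a unique solution Z for every Y ∈ ℝ^{m×2}) if and only if det(β·S - (a + i b)·T) ≠ 0, the determinant being computed over ℂ after complexifying S and T. -/
open Matrix

/-- Identify real `m × 2` matrices with `Fin m → ℂ`. -/
def colComplexEquiv (m : ℕ) : Matrix (Fin m) (Fin 2) ℝ ≃ (Fin m → ℂ) where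
  toFun Z i := ⟨Z i 0, Z i 1⟩
  invFun v := Matrix.of fun i j => if j = 0 then (v i).re else (v i).im
  left_inv Z := by
    ext i j
    fin_cases j <;> simp
  right_inv v := by
    funext i
    apply Complex.ext <;> simp

/-- With `D = β I₂` and `B = [[a,b],[-b,a]]`, the map
`Z ↦ S Z D - T Z B` on real `m × 2` matrices is bijective iff
`det(β S - (a + i b) T) ≠ 0` over `ℂ`. -/
theorem two_column_sylvester_like_operator_bijective_iff_det_ne_zero
    {m : ℕ} (S T : Matrix (Fin m) (Fin m) ℝ)
    (a b β : ℝ) (hβ : 0 < β)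
    (B D : Matrix (Fin 2) (Fin 2) ℝ)
    (hB : B = !![a, b; -b, a]) (hD : D = β • (1 : Matrix (Fin 2) (Fin 2) ℝ)) :
    Function.Bijective (fun Z : Matrix (Fin m) (Fin 2) ℝ => S * Z * D - T * Z * B) ↔
      (β • S.map Complex.ofReal - (↑a + Complex.I * ↑b) • T.map Complex.ofReal).det ≠ 0 := by
  set M : Matrix (Fin m) (Fin m) ℂ :=
    β • S.map Complex.ofReal - (↑a + Complex.I * ↑b) • T.map Complex.ofReal with hM
  set e := colComplexEquiv m with he
  have key : (fun Z : Matrix (Fin m) (Fin 2) ℝ => S * Z * D - T * Z * B)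
      = e.symm ∘ (M.mulVec ∘ e) := by
    funext Z
    apply e.injective
    simp only [Function.comp_apply, Equiv.apply_symm_apply]
    funext i
    have hL : e (S * Z * D - T * Z * B) i =
        (↑((S * Z * D - T * Z * B) i 0) : ℂ) + ↑((S * Z * D - T * Z * B) i 1) * Complex.I := by
      simp [he, colComplexEquiv, Complex.mk_eq_add_mul_I]
    have hR : M.mulVec (e Z) i =
        ∑ k, ((β : ℂ) * ↑(S i k) - (↑a + Complex.I * ↑b) * ↑(T i k)) *
          (↑(Z k 0) + ↑(Z k 1) * Complex.I) := by
      simp [Matrix.mulVec, dotProduct, hM, he, colComplexEquiv, Complex.mk_eq_add_mul_I,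
        Matrix.sub_apply, Matrix.smul_apply, Matrix.map_apply, Complex.real_smul]
    rw [hL, hR]
    have hSZD : S * Z * D = β • (S * Z) := by rw [hD, Matrix.mul_smul, Matrix.mul_one]
    have hTZB0 : (T * Z * B) i 0 = (T * Z) i 0 * a + (T * Z) i 1 * (-b) := by
      rw [Matrix.mul_apply, Fin.sum_univ_two, hB]
      simp
    have hTZB1 : (T * Z * B) i 1 = (T * Z) i 0 * b + (T * Z) i 1 * a := by
      rw [Matrix.mul_apply, Fin.sum_univ_two, hB]
      simp
    have h0 : (S * Z * D - T * Z * B) i 0 =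
        β * ∑ k, S i k * Z k 0 -
          (a * ∑ k, T i k * Z k 0 - b * ∑ k, T i k * Z k 1) := by
      rw [Matrix.sub_apply, hSZD, Matrix.smul_apply, smul_eq_mul, hTZB0,
        Matrix.mul_apply, Matrix.mul_apply, Matrix.mul_apply]
      ring
    have h1 : (S * Z * D - T * Z * B) i 1 =
        β * ∑ k, S i k * Z k 1 -
          (b * ∑ k, T i k * Z k 0 + a * ∑ k, T i k * Z k 1) := by
      rw [Matrix.sub_apply, hSZD, Matrix.smul_apply, smul_eq_mul, hTZB1,
        Matrix.mul_apply, Matrix.mul_apply, Matrix.mul_apply]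
      ring
    have hsum : ∑ k, ((β : ℂ) * ↑(S i k) - (↑a + Complex.I * ↑b) * ↑(T i k)) *
          (↑(Z k 0) + ↑(Z k 1) * Complex.I)
        = (↑(∑ k, (β * (S i k * Z k 0) -
              (a * (T i k * Z k 0) - b * (T i k * Z k 1)))) : ℂ) +
          ↑(∑ k, (β * (S i k * Z k 1) -
              (b * (T i k * Z k 0) + a * (T i k * Z k 1)))) * Complex.I := by
      rw [Complex.ofReal_sum, Complex.ofReal_sum, Finset.sum_mul, ← Finset.sum_add_distrib]
      refine Finset.sum_congr rfl fun k _ => ?_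
      simp only [Complex.ofReal_sub, Complex.ofReal_mul, Complex.ofReal_add]
      linear_combination (-(↑b * ↑(T i k) * ↑(Z k 1)) : ℂ) * Complex.I_sq
    rw [hsum, h0, h1]
    push_cast
    simp only [Finset.mul_sum, Finset.sum_sub_distrib, Finset.sum_add_distrib]
  rw [key, Equiv.comp_bijective, Equiv.bijective_comp]
  rw [show Function.Bijective M.mulVec ↔ IsUnit M from
    ⟨fun h => Matrix.mulVec_injective_iff_isUnit.mp h.injective,
     fun h => ⟨Matrix.mulVec_injective_iff_isUnit.mpr h,
       Matrix.mulVec_surjective_iff_isUnit.mpr h⟩⟩]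
  rw [Matrix.isUnit_iff_isUnit_det, isUnit_iff_ne_zero]
end

section
/- Let Ω > 0, let X ∈ ℝ^{m×n} and B ∈ ℝ^{n×n} satisfy ‖X‖∞ ≤ Ω and ‖B‖∞ ≤ Ω, and let α ∈ ℝ with 0 < α ≤ 1. Set s = ‖X‖∞·‖B‖∞, γ = min(1, Ω/s) if s > 0 and γ = 1 if s = 0, and Y = (γ·X)·B and β = α·γ. Then 0 < β ≤ 1, ‖Y‖∞ ≤ Ω, and β⁻¹·Y = (α⁻¹·X)·B. -/
open Matrix

/- Equip matrices with the operator norm induced by the vector sup-norm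
(the maximum absolute row sum norm `‖·‖∞`). -/
attribute [local instance] Matrix.linftyOpNormedAddCommGroup
attribute [local instance] Matrix.linftyOpNormedSpace

/-- Robust right update (Algorithm 2): with `‖X‖∞ ≤ Ω`, `‖B‖∞ ≤ Ω`,
`0 < α ≤ 1`, `γ = ProtectUpdate` scaling for `s = ‖X‖∞ ‖B‖∞`, `Y = (γ X) B` and
`β = α γ`, we get `0 < β ≤ 1`, `‖Y‖∞ ≤ Ω`, and `β⁻¹ Y = (α⁻¹ X) B`. -/
theorem robust_right_update_correct
    {m n : ℕ} (Ω : ℝ) (hΩ : 0 < Ω)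
    (X : Matrix (Fin m) (Fin n) ℝ) (B : Matrix (Fin n) (Fin n) ℝ)
    (hX : ‖X‖ ≤ Ω) (hB : ‖B‖ ≤ Ω)
    (α : ℝ) (hα0 : 0 < α) (hα1 : α ≤ 1)
    (s : ℝ) (hs : s = ‖X‖ * ‖B‖)
    (γ : ℝ) (hγ : γ = if 0 < s then min 1 (Ω / s) else 1)
    (Y : Matrix (Fin m) (Fin n) ℝ) (hY : Y = (γ • X) * B)
    (β : ℝ) (hβ : β = α * γ) :
    (0 < β ∧ β ≤ 1) ∧ ‖Y‖ ≤ Ω ∧ β⁻¹ • Y = (α⁻¹ • X) * B := by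
  have hγ0 : 0 < γ := by
    rw [hγ]; split_ifs with h
    · exact lt_min one_pos (div_pos hΩ h)
    · exact one_pos
  have hγ1 : γ ≤ 1 := by
    rw [hγ]; split_ifs with h
    · exact min_le_left _ _
    · exact le_refl 1
  refine ⟨⟨by rw [hβ]; positivity, by rw [hβ]; nlinarith⟩, ?_, ?_⟩
  · have hmul : ‖X * B‖ ≤ s := hs ▸ Matrix.linfty_opNorm_mul X B
    have hYn : ‖Y‖ = γ * ‖X * B‖ := by
      rw [hY, Matrix.smul_mul, norm_smul, Real.norm_eq_abs, abs_of_pos hγ0]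
    rw [hYn, hγ]
    split_ifs with h
    · calc min 1 (Ω / s) * ‖X * B‖ ≤ (Ω / s) * s :=
            mul_le_mul (min_le_right _ _) hmul (norm_nonneg _)
              (le_of_lt (div_pos hΩ h))
        _ = Ω := div_mul_cancel₀ Ω (ne_of_gt h)
    · have : ‖X * B‖ ≤ 0 := le_trans hmul (not_lt.mp h)
      nlinarith
  · rw [hY, hβ, Matrix.smul_mul, Matrix.smul_mul, smul_smul, mul_inv,
      mul_assoc, inv_mul_cancel₀ (ne_of_gt hγ0), mul_one]
end

section
/- Let Ω > 0, let T ∈ ℝ^{m×m} with ‖T‖∞ ≤ Ω, let X, Y ∈ ℝ^{m×n} with ‖X‖∞ ≤ Ω and ‖Y‖∞ ≤ Ω, and let α, β ∈ ℝ with 0 < α ≤ 1 and 0 < β ≤ 1. Set γ = min(α, β), s = (γ/β)·‖Y‖∞ + ‖T‖∞·((γ/α)·‖X‖∞), δ = min(1, Ω/s) if s > 0 and δ = 1 if s = 0, ζ = δ·γ, and Z = (δ·(γ/β))·Y - T·((δ·(γ/α))·X). Then 0 < ζ ≤ 1, ‖Z‖∞ ≤ Ω, and ζ⁻¹·Z =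 β⁻¹·Y - T·(α⁻¹·X). -/
open Matrix

/- Equip matrices with the operator norm induced by the vector sup-norm
(the maximum absolute row sum norm `‖·‖∞`). -/
attribute [local instance] Matrix.linftyOpNormedAddCommGroup
attribute [local instance] Matrix.linftyOpNormSMulClass

/-- Robust left update (Algorithm 3): with `‖T‖∞, ‖X‖∞, ‖Y‖∞ ≤ Ω`,
scaling factors `0 < α, β ≤ 1`, `γ = min(α,β)`, `δ` the `ProtectUpdate` scaling for
`s = (γ/β)‖Y‖∞ + ‖T‖∞ ((γ/α)‖X‖∞)`, `ζ = δ γ` and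
`Z = (δ (γ/β)) Y - T ((δ (γ/α)) X)`, we get `0 < ζ ≤ 1`, `‖Z‖∞ ≤ Ω` and
`ζ⁻¹ Z = β⁻¹ Y - T (α⁻¹ X)`. -/
theorem robust_left_update_correct
    {m n : ℕ} (Ω : ℝ) (hΩ : 0 < Ω)
    (T : Matrix (Fin m) (Fin m) ℝ) (X Y : Matrix (Fin m) (Fin n) ℝ)
    (hT : ‖T‖ ≤ Ω) (hX : ‖X‖ ≤ Ω) (hY : ‖Y‖ ≤ Ω)
    (α β : ℝ) (hα0 : 0 < α) (hα1 : α ≤ 1) (hβ0 : 0 < β) (hβ1 : β ≤ 1)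
    (γ : ℝ) (hγ : γ = min α β)
    (s : ℝ) (hs : s = (γ / β) * ‖Y‖ + ‖T‖ * ((γ / α) * ‖X‖))
    (δ : ℝ) (hδ : δ = if 0 < s then min 1 (Ω / s) else 1)
    (ζ : ℝ) (hζ : ζ = δ * γ)
    (Z : Matrix (Fin m) (Fin n) ℝ) (hZ : Z = (δ * (γ / β)) • Y - T * ((δ * (γ / α)) • X)) :
    (0 < ζ ∧ ζ ≤ 1) ∧ ‖Z‖ ≤ Ω ∧ ζ⁻¹ • Z = β⁻¹ • Y - T * (α⁻¹ • X) := by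
  have hγ0 : 0 < γ := by rw [hγ]; exact lt_min hα0 hβ0
  have hγ1 : γ ≤ 1 := by rw [hγ]; exact le_trans (min_le_left _ _) hα1
  have hδ0 : 0 < δ := by
    rw [hδ]; split_ifs with h
    · exact lt_min one_pos (div_pos hΩ h)
    · exact one_pos
  have hδ1 : δ ≤ 1 := by
    rw [hδ]; split_ifs with h
    · exact min_le_left _ _
    · exact le_refl 1
  have hζ0 : 0 < ζ := by rw [hζ]; positivity
  have hζ1 : ζ ≤ 1 := by
    rw [hζ]
    calc δ * γ ≤ 1 * 1 := by
          apply mul_le_mul hδ1 hγ1 (le_of_lt hγ0) zero_le_one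
      _ = 1 := by ring
  have hγβ : 0 ≤ γ / β := by positivity
  have hγα : 0 ≤ γ / α := by positivity
  have hT0 : 0 ≤ ‖T‖ := norm_nonneg _
  have hs0 : 0 ≤ s := by rw [hs]; positivity
  -- norm bound
  have hnorm : ‖Z‖ ≤ δ * s := by
    rw [hZ]
    calc ‖(δ * (γ / β)) • Y - T * ((δ * (γ / α)) • X)‖
        ≤ ‖(δ * (γ / β)) • Y‖ + ‖T * ((δ * (γ / α)) • X)‖ := norm_sub_le _ _
      _ ≤ ‖(δ * (γ / β)) • Y‖ + ‖T‖ * ‖(δ * (γ / α)) • X‖ := by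
          gcongr; exact Matrix.linfty_opNorm_mul _ _
      _ = |δ * (γ / β)| * ‖Y‖ + ‖T‖ * (|δ * (γ / α)| * ‖X‖) := by
          rw [norm_smul, norm_smul]; rfl
      _ = (δ * (γ / β)) * ‖Y‖ + ‖T‖ * ((δ * (γ / α)) * ‖X‖) := by
          rw [abs_of_nonneg (by positivity), abs_of_nonneg (by positivity)]
      _ = δ * s := by rw [hs]; ring
  have hZΩ : ‖Z‖ ≤ Ω := by
    rcases lt_or_eq_of_le hs0 with hspos | hseq
    · have : δ ≤ Ω / s := by rw [hδ, if_pos hspos]; exact min_le_right _ _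
      calc ‖Z‖ ≤ δ * s := hnorm
        _ ≤ (Ω / s) * s := by gcongr
        _ = Ω := div_mul_cancel₀ _ (ne_of_gt hspos)
    · calc ‖Z‖ ≤ δ * s := hnorm
        _ = 0 := by rw [← hseq, mul_zero]
        _ ≤ Ω := le_of_lt hΩ
  refine ⟨⟨hζ0, hζ1⟩, hZΩ, ?_⟩
  rw [hZ, Matrix.mul_smul, smul_sub, smul_smul, smul_smul, hζ]
  have h1 : (δ * γ)⁻¹ * (δ * (γ / β)) = β⁻¹ := by
    field_simp
  have h2 : (δ * γ)⁻¹ * (δ * (γ / α)) = α⁻¹ := by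
    field_simp
  rw [h1, h2, Matrix.mul_smul]
end
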